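/- Let B' be a Bernstein set in the closed interval [a, b], where a < b. Then B' is not Lebesgue measurable, and B' is uncountable. -/

import Mathlib

open Filter Set

/-- Data generating a generalized Cantor set: closed intervals
`I_{i₁,…,iₙ} = [c l, d l]` indexed by nonempty finite binary sequences
(`l : List Bool`, with the last entry the most recently added index),
inside a closed interval `[lo, hi]`, with diameters controlled by a strictly
decreasing positive sequence `e` tending to `0`. -/
structure GenCantor where
  lo : ℝ
  hi : ℝ
  lo_lt_hi : lo < hi
  e : ℕ → ℝ
  e_pos : ∀ n : ℕ, 0 < e n
  e_anti : StrictAnti e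
  e_lim : Filter.Tendsto e Filter.atTop (nhds 0)
  c : List Bool → ℝ
  d : List Bool → ℝ
  diam_pos : ∀ l : List Bool, l ≠ [] → 0 < d l - c l
  diam_lt : ∀ l : List Bool, l ≠ [] → d l - c l < e l.length
  root_sub : ∀ i : Bool, Set.Icc (c [i]) (d [i]) ⊆ Set.Icc lo hi
  nested : ∀ l : List Bool, l ≠ [] → ∀ i : Bool,
    Set.Icc (c (l ++ [i])) (d (l ++ [i])) ⊆ Set.Icc (c l) (d l)
  disj : ∀ l : List Bool,
    Set.Icc (c (l ++ [false])) (d (l ++ [false])) ∩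
      Set.Icc (c (l ++ [true])) (d (l ++ [true])) = ∅

/-- The generalized Cantor set generated by the data `G`:
`C = ⋂_{n ≥ 1} ⋃_{i₁,…,iₙ} I_{i₁,…,iₙ}`. -/
def GenCantor.C (G : GenCantor) : Set ℝ :=
  ⋂ n : ℕ, ⋃ l ∈ {l : List Bool | l.length = n + 1}, Set.Icc (G.c l) (G.d l)

/-- A set of reals is a generalized Cantor set if it is generated by some data. -/
def IsGenCantorSet (C : Set ℝ) : Prop := ∃ G : GenCantor, G.C = C

/-- The length-`(n+1)` initial segment `[s 0, …, s n]` of a binary sequence. -/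
def prefixSeq (s : ℕ → Bool) (n : ℕ) : List Bool := List.ofFn fun i : Fin (n + 1) => s i

/-- A set `P ⊆ ℝ` is perfect if it is closed and each of its points is a
limit point of `P`. -/
def PerfectSet (P : Set ℝ) : Prop := IsClosed P ∧ ∀ x ∈ P, x ∈ closure (P \ {x})

/-- A valid history for player A before A's move number `n+1`:
moves `a 0 = a₀ < a 1 < ⋯ < a n < b n < ⋯ < b 1 < b 0 = b₀`. -/
def ValidHistA (a₀ b₀ : ℝ) {n : ℕ} (a b : Fin (n + 1) → ℝ) : Prop :=
  a 0 = a₀ ∧ b 0 = b₀ ∧ StrictMono a ∧ StrictAnti b ∧ a (Fin.last n) < b (Fin.last n)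

/-- A strategy for player A in the Cantor game on `[a₀, b₀]`:
functions `f n` producing the move `a (n+1)` from the history
`(a 0, b 0, …, a n, b n)`, with `a n < f n a b < b n` on valid histories. -/
structure StratA (a₀ b₀ : ℝ) where
  f : (n : ℕ) → (Fin (n + 1) → ℝ) → (Fin (n + 1) → ℝ) → ℝ
  valid : ∀ (n : ℕ) (a b : Fin (n + 1) → ℝ), ValidHistA a₀ b₀ a b →
    a (Fin.last n) < f n a b ∧ f n a b < b (Fin.last n)

/-- A valid history for player B before B's move number `n+1`:
`a 0 = a₀ < a 1 < ⋯ < a (n+1) < b n < ⋯ < b 1 < b 0 = b₀`. -/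
def ValidHistB (a₀ b₀ : ℝ) {n : ℕ} (a : Fin (n + 2) → ℝ) (b : Fin (n + 1) → ℝ) : Prop :=
  a 0 = a₀ ∧ b 0 = b₀ ∧ StrictMono a ∧ StrictAnti b ∧ a (Fin.last (n + 1)) < b (Fin.last n)

/-- A strategy for player B in the Cantor game on `[a₀, b₀]`:
functions `g n` producing the move `b (n+1)` from the history
`(a 0, b 0, …, a n, b n, a (n+1))`, with `a (n+1) < g n a b < b n` on valid histories. -/
structure StratB (a₀ b₀ : ℝ) where
  g : (n : ℕ) → (Fin (n + 2) → ℝ) → (Fin (n + 1) → ℝ) → ℝ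
  valid : ∀ (n : ℕ) (a : Fin (n + 2) → ℝ) (b : Fin (n + 1) → ℝ), ValidHistB a₀ b₀ a b →
    a (Fin.last (n + 1)) < g n a b ∧ g n a b < b (Fin.last n)

/-- A play of the Cantor game on `[a₀, b₀]`:
`a (n-1) < a n < b n < b (n-1)` for all `n ≥ 1`. -/
def IsPlay (a₀ b₀ : ℝ) (a b : ℕ → ℝ) : Prop :=
  a 0 = a₀ ∧ b 0 = b₀ ∧ ∀ n : ℕ, a n < a (n + 1) ∧ a (n + 1) < b (n + 1) ∧ b (n + 1) < b n

/-- A play is consistent with a strategy for A if each of A's moves is given by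
the strategy applied to the preceding history. -/
def ConsistentA {a₀ b₀ : ℝ} (σ : StratA a₀ b₀) (a b : ℕ → ℝ) : Prop :=
  ∀ n : ℕ, a (n + 1) = σ.f n (fun i : Fin (n + 1) => a i) (fun i : Fin (n + 1) => b i)

/-- A play is consistent with a strategy for B if each of B's moves is given by
the strategy applied to the preceding history. -/
def ConsistentB {a₀ b₀ : ℝ} (σ : StratB a₀ b₀) (a b : ℕ → ℝ) : Prop :=
  ∀ n : ℕ, b (n + 1) = σ.g n (fun i : Fin (n + 2) => a i) (fun i : Fin (n + 1) => b i)

/-- The limit set of a strategy for player A: all limits `lim aₙ` over plays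
consistent with the strategy. -/
def limitSetA {a₀ b₀ : ℝ} (σ : StratA a₀ b₀) : Set ℝ :=
  {x | ∃ a b : ℕ → ℝ, IsPlay a₀ b₀ a b ∧ ConsistentA σ a b ∧
    Filter.Tendsto a Filter.atTop (nhds x)}

/-- The limit set of a strategy for player B: all limits `lim aₙ` over plays
consistent with the strategy. -/
def limitSetB {a₀ b₀ : ℝ} (σ : StratB a₀ b₀) : Set ℝ :=
  {x | ∃ a b : ℕ → ℝ, IsPlay a₀ b₀ a b ∧ ConsistentB σ a b ∧
    Filter.Tendsto a Filter.atTop (nhds x)}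

/-- A strategy for A is winning for target set `S` iff its limit set lies in `S`. -/
def WinningA {a₀ b₀ : ℝ} (σ : StratA a₀ b₀) (S : Set ℝ) : Prop := limitSetA σ ⊆ S

/-- A strategy for B is winning for target set `S` iff its limit set lies in
`[a₀, b₀] − S`. -/
def WinningB {a₀ b₀ : ℝ} (σ : StratB a₀ b₀) (S : Set ℝ) : Prop :=
  limitSetB σ ⊆ Set.Icc a₀ b₀ \ S

/-- `B` is a Bernstein set in `X ⊆ ℝ` (with its subspace topology) if `B ⊆ X` and
neither `B` nor `X − B` contains a set that is uncountable and closed in `X`. -/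
def IsBernsteinIn (X B : Set ℝ) : Prop :=
  B ⊆ X ∧
    (¬ ∃ T : Set ℝ, T ⊆ B ∧ ¬ T.Countable ∧ IsClosed (Subtype.val ⁻¹' T : Set X)) ∧
    (¬ ∃ T : Set ℝ, T ⊆ X \ B ∧ ¬ T.Countable ∧ IsClosed (Subtype.val ⁻¹' T : Set X))

/-- The set of right condensation points of `S` in `[a₀, b₀]`. -/
def rightCondPts (a₀ b₀ : ℝ) (S : Set ℝ) : Set ℝ :=
  {x ∈ Set.Icc a₀ b₀ | ∀ ε > 0, ¬ (Set.Ioo x (x + ε) ∩ S).Countable}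

open MeasureTheory in
lemma exists_uncountable_closed_subset (a b : ℝ) (S : Set ℝ) (hSab : S ⊆ Set.Icc a b)
    (hS : NullMeasurableSet S volume) (hpos : volume S ≠ 0) :
    ∃ T : Set ℝ, T ⊆ S ∧ ¬ T.Countable ∧ IsClosed T := by
  obtain ⟨t, hts, htm, hteq⟩ := hS.exists_measurable_subset_ae_eq
  have htvol : volume t = volume S := measure_congr hteq
  have htfin : volume t ≠ ⊤ := by
    refine ne_top_of_le_ne_top ?_ (measure_mono (hts.trans hSab))
    simp [Real.volume_Icc]
  obtain ⟨K, hKt, hKc, hKlt⟩ :=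
    htm.exists_isCompact_lt_add (μ := volume) htfin (ε := volume t)
      (by rw [htvol]; exact hpos)
  refine ⟨K, hKt.trans hts, ?_, hKc.isClosed⟩
  intro hcount
  have : volume K = 0 := hcount.measure_zero volume
  rw [this, zero_add] at hKlt
  exact lt_irrefl _ hKlt

/-- A Bernstein set in `[a, b]` is not Lebesgue measurable and is
uncountable. -/
theorem stmt12 (a b : ℝ) (hab : a < b) (B : Set ℝ)
    (hB : IsBernsteinIn (Set.Icc a b) B) :
    ¬ MeasureTheory.NullMeasurableSet B MeasureTheory.volume ∧ ¬ B.Countable := by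
  open MeasureTheory in
  obtain ⟨hBsub, hB1, hB2⟩ := hB
  have key : ¬ NullMeasurableSet B volume := by
    intro hmeas
    have hCsub : Set.Icc a b \ B ⊆ Set.Icc a b := Set.diff_subset
    have hCmeas : NullMeasurableSet (Set.Icc a b \ B) volume :=
      (measurableSet_Icc.nullMeasurableSet).diff hmeas
    have hunion : Set.Icc a b ⊆ B ∪ (Set.Icc a b \ B) := by
      intro x hx
      by_cases hxB : x ∈ B
      · exact Or.inl hxB
      · exact Or.inr ⟨hx, hxB⟩
    have hposIcc : (0 : ENNReal) < volume (Set.Icc a b) := by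
      rw [Real.volume_Icc]; exact ENNReal.ofReal_pos.mpr (by linarith)
    have : volume B ≠ 0 ∨ volume (Set.Icc a b \ B) ≠ 0 := by
      by_contra h
      push_neg at h
      have hle : volume (Set.Icc a b) ≤ volume B + volume (Set.Icc a b \ B) :=
        (measure_mono hunion).trans (measure_union_le _ _)
      rw [h.1, h.2, add_zero] at hle
      exact absurd (le_antisymm hle zero_le) (ne_of_gt hposIcc)
    rcases this with h | h
    · obtain ⟨T, hTB, hTc, hTcl⟩ := exists_uncountable_closed_subset a b B hBsub hmeas h
      exact hB1 ⟨T, hTB, hTc, hTcl.preimage continuous_subtype_val⟩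
    · obtain ⟨T, hTB, hTc, hTcl⟩ :=
        exists_uncountable_closed_subset a b _ hCsub hCmeas h
      exact hB2 ⟨T, hTB, hTc, hTcl.preimage continuous_subtype_val⟩
  refine ⟨key, fun hcount => key ?_⟩
  exact NullMeasurableSet.of_null (hcount.measure_zero volume)
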